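/- Let m ≥ n ≥ 1, let c_1, …, c_n ∈ ℝ^m be linearly independent with Gram–Schmidt orthogonalization c*_1, …, c*_n, and let t ∈ ℝ^m. Then there exist integers w_1, …, w_n such that the vector t′ = t − Σ_{i=1}^n w_i c_i satisfies: (i) for every i ∈ {1,…,n}, the coefficient ⟨t′, c*_i⟩/⟨c*_i, c*_i⟩ lies in (−1/2, 1/2]; and consequently (ii) the orthogonal projection π(t′) of t′ onto span(c_1,…,c_n) satisfies ‖π(t′)‖₂² ≤ ¼ · Σ_{i=1}^n ‖c*_i‖₂². In particular t − t′ belongs to the lattice L = {Σ_i z_i c_i : z_i ∈ ℤ} and the Euclidean distance of t′ to L is at most (¼ Σ_{i=1}^n ‖c*_i‖₂² + ‖t′ − π(t′)‖₂²)^{1/2}. -/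

import Mathlib

open scoped RealInnerProductSpace

/-- The Gram–Schmidt orthogonalization of a family of vectors indexed by `Fin n`
(instances given explicitly to aid elaboration). -/
noncomputable def gso {m n : ℕ} (c : Fin n → EuclideanSpace ℝ (Fin m)) :
    Fin n → EuclideanSpace ℝ (Fin m) :=
  @InnerProductSpace.gramSchmidt ℝ _ _ _ _ (Fin n) Fin.instLinearOrder (Fin.instLocallyFiniteOrderBot n)
    IsWellOrder.toIsWellFounded c

/-- Babai-style rounding: Given linearly independent `c_1, …, c_n ∈ ℝ^m` with
Gram–Schmidt orthogonalization `c*_1, …, c*_n` and any `t ∈ ℝ^m`, there exist integers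
`w_1, …, w_n` such that `t' = t − ∑ w_i c_i` satisfies: (i) every Gram–Schmidt coefficient
`⟪t', c*_i⟫/⟪c*_i, c*_i⟫` lies in `(−1/2, 1/2]`; (ii) the orthogonal projection `π(t')` of `t'`
onto `span(c_1,…,c_n)` satisfies `‖π(t')‖² ≤ ¼ ∑ ‖c*_i‖²`; in particular `t − t'` lies in the
lattice generated by the `c_i`, and the Euclidean distance of `t'` to this lattice is at most
`(¼ ∑ ‖c*_i‖² + ‖t' − π(t')‖²)^{1/2}`. -/
lemma gso_orth {m n : ℕ} (c : Fin n → EuclideanSpace ℝ (Fin m)) {i j : Fin n} (h : i ≠ j) :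
    ⟪gso c i, gso c j⟫ = 0 :=
  @InnerProductSpace.gramSchmidt_orthogonal ℝ _ _ _ _ (Fin n) Fin.instLinearOrder (Fin.instLocallyFiniteOrderBot n)
    IsWellOrder.toIsWellFounded c i j h

lemma gso_ne_zero {m n : ℕ} {c : Fin n → EuclideanSpace ℝ (Fin m)}
    (hc : LinearIndependent ℝ c) (i : Fin n) : gso c i ≠ 0 :=
  @InnerProductSpace.gramSchmidt_ne_zero ℝ _ _ _ _ (Fin n) Fin.instLinearOrder (Fin.instLocallyFiniteOrderBot n)
    IsWellOrder.toIsWellFounded c i hc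

lemma mem_span_gso {m n : ℕ} (c : Fin n → EuclideanSpace ℝ (Fin m)) {i j : Fin n} (hij : i ≤ j) :
    c i ∈ Submodule.span ℝ (gso c '' Set.Iic j) :=
  @InnerProductSpace.mem_span_gramSchmidt ℝ _ _ _ _ (Fin n) Fin.instLinearOrder (Fin.instLocallyFiniteOrderBot n)
    IsWellOrder.toIsWellFounded c i j hij

lemma span_gso {m n : ℕ} (c : Fin n → EuclideanSpace ℝ (Fin m)) :
    Submodule.span ℝ (Set.range (gso c)) = Submodule.span ℝ (Set.range c) :=
  @InnerProductSpace.span_gramSchmidt ℝ _ _ _ _ (Fin n) Fin.instLinearOrder (Fin.instLocallyFiniteOrderBot n)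
    IsWellOrder.toIsWellFounded c

lemma gso_def'' {m n : ℕ} (c : Fin n → EuclideanSpace ℝ (Fin m)) (i : Fin n) :
    c i = gso c i + ∑ j ∈ Finset.Iio i,
      (⟪gso c j, c i⟫ / (‖gso c j‖ : ℝ) ^ 2) • gso c j :=
  @InnerProductSpace.gramSchmidt_def'' ℝ _ _ _ _ (Fin n) Fin.instLinearOrder (Fin.instLocallyFiniteOrderBot n)
    IsWellOrder.toIsWellFounded c i

lemma inner_c_gso_zero {m n : ℕ} (c : Fin n → EuclideanSpace ℝ (Fin m)) {j i : Fin n}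
    (h : j < i) : ⟪c j, gso c i⟫ = 0 := by
  have hmem := mem_span_gso c (le_refl j)
  have key : ∀ x ∈ Submodule.span ℝ (gso c '' Set.Iic j), ⟪x, gso c i⟫ = 0 := by
    intro x hx
    induction hx using Submodule.span_induction with
    | mem x hx =>
      obtain ⟨k, hk, hkx⟩ := (Set.mem_image _ _ _).mp hx
      rw [← hkx]
      exact gso_orth c (ne_of_lt (lt_of_le_of_lt hk h))
    | zero => simp
    | add x y _ _ hx hy => rw [inner_add_left, hx, hy, add_zero]
    | smul a x _ hx => rw [real_inner_smul_left, hx, mul_zero]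
  exact key _ hmem

lemma inner_c_gso_self {m n : ℕ} (c : Fin n → EuclideanSpace ℝ (Fin m)) (i : Fin n) :
    ⟪c i, gso c i⟫ = ⟪gso c i, gso c i⟫ := by
  conv_lhs => rw [gso_def'' c i]
  rw [inner_add_left, sum_inner]
  have : ∀ j ∈ Finset.Iio i, ⟪(⟪gso c j, c i⟫ / (‖gso c j‖ : ℝ) ^ 2) • gso c j, gso c i⟫ = 0 := by
    intro j hj
    rw [real_inner_smul_left, gso_orth c (ne_of_lt (Finset.mem_Iio.mp hj)), mul_zero]
  rw [Finset.sum_congr rfl this, Finset.sum_const_zero, add_zero]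

lemma babai_round {m n : ℕ} (c : Fin n → EuclideanSpace ℝ (Fin m)) (hc : LinearIndependent ℝ c)
    (t : EuclideanSpace ℝ (Fin m)) :
    ∃ w : Fin n → ℤ, ∀ i : Fin n,
      ⟪t - ∑ j, (w j : ℝ) • c j, gso c i⟫ / ⟪gso c i, gso c i⟫ ∈ Set.Ioc (-(1/2) : ℝ) (1/2) := by
  have key : ∀ k : ℕ, k ≤ n → ∃ w : Fin n → ℤ, ∀ i : Fin n, n - k ≤ i.val →
      ⟪t - ∑ j, (w j : ℝ) • c j, gso c i⟫ / ⟪gso c i, gso c i⟫ ∈ Set.Ioc (-(1/2) : ℝ) (1/2) := by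
    intro k
    induction k with
    | zero =>
      intro _
      exact ⟨0, fun i hi => absurd hi (by omega)⟩
    | succ k ih =>
      intro hk1
      obtain ⟨w, hw⟩ := ih (by omega)
      have hi0lt : n - (k+1) < n := by omega
      set i0 : Fin n := ⟨n - (k+1), hi0lt⟩ with hi0
      set x : ℝ := ⟪t - ∑ j, (w j : ℝ) • c j, gso c i0⟫ / ⟪gso c i0, gso c i0⟫ with hx
      set a : ℤ := ⌈x - 1/2⌉ with ha
      refine ⟨fun j => if j = i0 then w j + a else w j, ?_⟩
      have hsum : ∑ j, ((if j = i0 then w j + a else w j : ℤ) : ℝ) • c j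
          = (∑ j, (w j : ℝ) • c j) + (a : ℝ) • c i0 := by
        have hterm : ∀ j : Fin n, ((if j = i0 then w j + a else w j : ℤ) : ℝ) • c j
            = (w j : ℝ) • c j + (if j = i0 then (a : ℝ) • c i0 else 0) := by
          intro j
          by_cases hj : j = i0
          · subst hj; simp [add_smul]
          · simp [hj]
        rw [Finset.sum_congr rfl (fun j _ => hterm j), Finset.sum_add_distrib,
          Finset.sum_ite_eq' Finset.univ i0 (fun _ => (a : ℝ) • c i0)]
        simp
      have hinner : ∀ i : Fin n,
          ⟪t - ∑ j, ((if j = i0 then w j + a else w j : ℤ) : ℝ) • c j, gso c i⟫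
          = ⟪t - ∑ j, (w j : ℝ) • c j, gso c i⟫ - (a : ℝ) * ⟪c i0, gso c i⟫ := by
        intro i
        rw [hsum, sub_add_eq_sub_sub, inner_sub_left, real_inner_smul_left]
      intro i hi
      beta_reduce
      rcases eq_or_lt_of_le hi with heq | hlt
      · -- i = i0
        have hii0 : i = i0 := Fin.ext heq.symm
        rw [hii0, hinner, inner_c_gso_self c i0]
        have hd : ⟪gso c i0, gso c i0⟫ ≠ 0 := by
          rw [real_inner_self_eq_norm_sq]
          exact pow_ne_zero 2 (norm_ne_zero_iff.mpr (gso_ne_zero hc i0))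
        have hval : (⟪t - ∑ j, (w j : ℝ) • c j, gso c i0⟫ - (a : ℝ) * ⟪gso c i0, gso c i0⟫)
            / ⟪gso c i0, gso c i0⟫ = x - a := by
          rw [hx, sub_div, mul_div_assoc, div_self hd, mul_one]
        rw [hval]
        constructor
        · have := Int.ceil_lt_add_one (x - 1/2)
          rw [← ha] at this
          linarith
        · have := Int.le_ceil (x - 1/2)
          rw [← ha] at this
          linarith
      · -- i0 < i
        have hlt' : i0 < i := by
          have hv : (i0 : ℕ) = n - (k + 1) := rfl
          rw [Fin.lt_def]
          omega
        rw [hinner, inner_c_gso_zero c hlt', mul_zero, sub_zero]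
        exact hw i (by omega)
  obtain ⟨w, hw⟩ := key n le_rfl
  exact ⟨w, fun i => hw i (by omega)⟩

lemma proj_norm_sq_le {m n : ℕ} {c : Fin n → EuclideanSpace ℝ (Fin m)}
    (hc : LinearIndependent ℝ c) (t' : EuclideanSpace ℝ (Fin m))
    (h : ∀ i, ⟪t', gso c i⟫ / ⟪gso c i, gso c i⟫ ∈ Set.Ioc (-(1/2) : ℝ) (1/2)) :
    ‖(Submodule.orthogonalProjectionOnto (Submodule.span ℝ (Set.range c)) t' :
        EuclideanSpace ℝ (Fin m))‖ ^ 2 ≤ (1/4) * ∑ i, ‖gso c i‖ ^ 2 := by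
  set K := Submodule.span ℝ (Set.range c) with hK
  set p : EuclideanSpace ℝ (Fin m) := (Submodule.orthogonalProjectionOnto K t' : EuclideanSpace ℝ (Fin m))
    with hp
  have hpK : p ∈ K := (Submodule.orthogonalProjectionOnto K t').2
  have hp_span : p ∈ Submodule.span ℝ (Set.range (gso c)) := by rw [span_gso]; exact hpK
  obtain ⟨b, hb⟩ := (Submodule.mem_span_range_iff_exists_fun ℝ).mp hp_span
  have hgK : ∀ i, gso c i ∈ K := fun i => by
    rw [hK, ← span_gso]; exact Submodule.subset_span ⟨i, rfl⟩
  have hKo : t' - p ∈ Kᗮ := Submodule.sub_starProjection_mem_orthogonal t'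
  have horth : ∀ i : Fin n, ⟪t', gso c i⟫ = ⟪p, gso c i⟫ := by
    intro i
    have h0 : ⟪gso c i, t' - p⟫ = 0 := (Submodule.mem_orthogonal K _).mp hKo _ (hgK i)
    rw [real_inner_comm] at h0
    have := inner_sub_left (𝕜 := ℝ) t' p (gso c i)
    rw [h0] at this
    linarith [this]
  have hd : ∀ i : Fin n, ⟪gso c i, gso c i⟫ ≠ 0 := by
    intro i
    rw [real_inner_self_eq_norm_sq]
    exact pow_ne_zero 2 (norm_ne_zero_iff.mpr (gso_ne_zero hc i))
  have hpi : ∀ i : Fin n, ⟪p, gso c i⟫ = b i * ⟪gso c i, gso c i⟫ := by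
    intro i
    rw [← hb, sum_inner]
    rw [Finset.sum_eq_single i]
    · rw [real_inner_smul_left]
    · intro j _ hj
      rw [real_inner_smul_left, gso_orth c hj, mul_zero]
    · intro hi; exact absurd (Finset.mem_univ i) hi
  have hbval : ∀ i : Fin n, b i ∈ Set.Ioc (-(1/2) : ℝ) (1/2) := by
    intro i
    have : ⟪t', gso c i⟫ / ⟪gso c i, gso c i⟫ = b i := by
      rw [horth i, hpi i, mul_div_assoc, div_self (hd i), mul_one]
    rw [← this]
    exact h i
  have hnorm : ‖p‖ ^ 2 = ∑ i, b i ^ 2 * ‖gso c i‖ ^ 2 := by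
    rw [← real_inner_self_eq_norm_sq]
    conv_lhs => rw [← hb, sum_inner]
    refine Finset.sum_congr rfl ?_
    intro i _
    rw [real_inner_smul_left, inner_sum]
    rw [Finset.sum_eq_single i]
    · rw [real_inner_smul_right, real_inner_self_eq_norm_sq]; ring
    · intro j _ hj
      rw [real_inner_smul_right, gso_orth c (Ne.symm hj), mul_zero]
    · intro hi; exact absurd (Finset.mem_univ i) hi
  rw [hnorm, Finset.mul_sum]
  refine Finset.sum_le_sum ?_
  intro i _
  have hbi := hbval i
  obtain ⟨h1, h2⟩ := hbi
  have : b i ^ 2 ≤ 1/4 := by nlinarith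
  have hn : (0:ℝ) ≤ ‖gso c i‖ ^ 2 := sq_nonneg _
  nlinarith

theorem stmt_6 (m n : ℕ) (hn : 1 ≤ n) (hmn : n ≤ m)
    (c : Fin n → EuclideanSpace ℝ (Fin m)) (hc : LinearIndependent ℝ c)
    (t : EuclideanSpace ℝ (Fin m)) :
    ∃ w : Fin n → ℤ, ∃ t' : EuclideanSpace ℝ (Fin m),
      t' = t - ∑ i, (w i : ℝ) • c i ∧
      (∀ i : Fin n,
        ⟪t', gso c i⟫ / ⟪gso c i, gso c i⟫ ∈ Set.Ioc (-(1/2) : ℝ) (1/2)) ∧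
      ‖(Submodule.orthogonalProjectionOnto (Submodule.span ℝ (Set.range c)) t' :
          EuclideanSpace ℝ (Fin m))‖ ^ 2 ≤ (1/4) * ∑ i, ‖gso c i‖ ^ 2 ∧
      (∃ zz : Fin n → ℤ, t - t' = ∑ i, (zz i : ℝ) • c i) ∧
      (∃ y : Fin n → ℤ,
        ‖t' - ∑ i, (y i : ℝ) • c i‖ ≤
          Real.sqrt ((1/4) * ∑ i, ‖gso c i‖ ^ 2 +
            ‖t' - (Submodule.orthogonalProjectionOnto (Submodule.span ℝ (Set.range c)) t' :
              EuclideanSpace ℝ (Fin m))‖ ^ 2)) := by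
  obtain ⟨w, hw⟩ := babai_round c hc t
  set t' : EuclideanSpace ℝ (Fin m) := t - ∑ i, (w i : ℝ) • c i with ht'
  have hproj := proj_norm_sq_le hc t' hw
  refine ⟨w, t', rfl, hw, hproj, ⟨w, by rw [ht']; abel⟩, ⟨0, ?_⟩⟩
  simp only [Pi.zero_apply, Int.cast_zero, zero_smul, Finset.sum_const_zero, sub_zero]
  set K := Submodule.span ℝ (Set.range c) with hK
  set p : EuclideanSpace ℝ (Fin m) := (Submodule.orthogonalProjectionOnto K t' : EuclideanSpace ℝ (Fin m))
    with hp
  have hpK : p ∈ K := (Submodule.orthogonalProjectionOnto K t').2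
  have hKo : t' - p ∈ Kᗮ := Submodule.sub_starProjection_mem_orthogonal t'
  have h0 : ⟪p, t' - p⟫ = 0 := (Submodule.mem_orthogonal K _).mp hKo _ hpK
  have hpyth : ‖t'‖ ^ 2 = ‖p‖ ^ 2 + ‖t' - p‖ ^ 2 := by
    have hadd := norm_add_sq_real p (t' - p)
    rw [add_sub_cancel] at hadd
    rw [h0] at hadd
    linarith
  rw [← Real.sqrt_sq (norm_nonneg t')]
  exact Real.sqrt_le_sqrt (by linarith)
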